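/- Let r, s, n, j be integers with gcd(r,s) = 1, n ≥ 1 and 0 ≤ j. Then gcd(r^n − s^n, r^j − s^j) = ±(r^{gcd(n,j)} − s^{gcd(n,j)}), i.e., |gcd(r^n − s^n, r^j − s^j)| = |r^{gcd(n,j)} − s^{gcd(n,j)}|. -/

import Mathlib

theorem int_gcd_add_mul (a b c : ℤ) : Int.gcd a (b + a * c) = Int.gcd a b := by
  apply Nat.dvd_antisymm
  · rw [← Int.natCast_dvd_natCast]
    refine Int.dvd_coe_gcd (Int.gcd_dvd_left _ _) ?_
    have h1 : (↑(Int.gcd a (b + a * c)) : ℤ) ∣ b + a * c := Int.gcd_dvd_right _ _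
    have h2 : (↑(Int.gcd a (b + a * c)) : ℤ) ∣ a := Int.gcd_dvd_left _ _
    have := dvd_sub h1 (h2.mul_right c)
    simpa using this
  · rw [← Int.natCast_dvd_natCast]
    refine Int.dvd_coe_gcd (Int.gcd_dvd_left _ _) ?_
    exact dvd_add (Int.gcd_dvd_right _ _) ((Int.gcd_dvd_left _ _).mul_right c)

theorem euclid_step (r s : ℤ) (hrs : Int.gcd r s = 1) (n j : ℕ) (hn : 1 ≤ n) :
    Int.gcd (r ^ n - s ^ n) (r ^ j - s ^ j) =
      Int.gcd (r ^ n - s ^ n) (r ^ (j % n) - s ^ (j % n)) := by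
  set t := j % n with ht
  set q := j / n with hq
  have hj : j = t + n * q := (Nat.mod_add_div j n).symm
  have hco : IsCoprime (r ^ n - s ^ n) s := by
    have h1 : IsCoprime (r ^ n) s := (Int.isCoprime_iff_gcd_eq_one.mpr hrs).pow_left
    have hpow : s * -s ^ (n - 1) = -s ^ n := by
      have h2 : s * s ^ (n - 1) = s ^ n := by rw [← pow_succ']; congr 1; omega
      rw [mul_neg, h2]
    -- a + s * c form
    have : IsCoprime (r ^ n + s * -(s ^ (n-1))) s := h1.add_mul_left_left _
    rwa [hpow, ← sub_eq_add_neg] at this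
  obtain ⟨e, he⟩ : (r ^ n - s ^ n) ∣ (r ^ (n * q) - s ^ (n * q)) := by
    simpa [pow_mul] using sub_dvd_pow_sub_pow (r ^ n) (s ^ n) q
  have key : r ^ j - s ^ j = s ^ (n * q) * (r ^ t - s ^ t) + (r ^ n - s ^ n) * (r ^ t * e) := by
    have : r ^ j - s ^ j = s ^ (n * q) * (r ^ t - s ^ t) + r ^ t * (r ^ (n * q) - s ^ (n * q)) := by
      rw [hj, pow_add, pow_add]; ring
    rw [this, he]; ring
  rw [key, int_gcd_add_mul]
  have hco2 : Int.gcd (s ^ (n * q)) (r ^ n - s ^ n) = 1 :=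
    Int.isCoprime_iff_gcd_eq_one.mp (hco.symm.pow_left)
  show Nat.gcd _ (_ * _ : ℤ).natAbs = _
  rw [Int.natAbs_mul]
  exact Nat.Coprime.gcd_mul_left_cancel_right _ hco2

/-- for coprime integers `r, s` and natural numbers `n ≥ 1`, `j`,
`gcd(r^n - s^n, r^j - s^j) = |r^{gcd(n,j)} - s^{gcd(n,j)}|`. -/
theorem stmt_18 (r s : ℤ) (hrs : Int.gcd r s = 1) (n j : ℕ) (hn : 1 ≤ n) :
    Int.gcd (r ^ n - s ^ n) (r ^ j - s ^ j) =
      (r ^ Nat.gcd n j - s ^ Nat.gcd n j).natAbs := by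
  clear hn
  induction n using Nat.strong_induction_on generalizing j with
  | _ n ih =>
    rcases Nat.eq_zero_or_pos n with h0 | hpos
    · subst h0; simp [Int.gcd]
    · rw [euclid_step r s hrs n j hpos, Int.gcd_comm,
        ih (j % n) (Nat.mod_lt j hpos) n, ← Nat.gcd_rec]
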